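/- arXiv:2409.19908 — 2 statements merged into one kernel-verified Lean document; each statement's English description precedes it below -/
import Mathlib

section
/- Every (r+1)-uniform hypergraph H on n vertices with maximum degree at most d ≥ 1 contains an independent set of size at least (1 - 1/r) · n / d^{1/r}. -/
open Finset

lemma binom_sum' {V : Type*} [DecidableEq V] (U : Finset V) (p q : ℝ) :
    ∑ T ∈ U.powerset, p ^ T.card * q ^ (U.card - T.card) = (p + q) ^ U.card := by
  have h := Finset.prod_add (fun _ : V => p) (fun _ => q) U
  simp only [Finset.prod_const] at h
  rw [h]
  exact Finset.sum_congr rfl fun T hT => by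
    rw [Finset.card_sdiff_of_subset (Finset.mem_powerset.mp hT)]

lemma cond_sum' {V : Type*} [Fintype V] [DecidableEq V] (A : Finset V) (p : ℝ) :
    ∑ S ∈ (Finset.univ : Finset V).powerset.filter (fun S => A ⊆ S),
      p ^ S.card * (1 - p) ^ (Fintype.card V - S.card) = p ^ A.card := by
  have key : ∑ S ∈ (Finset.univ : Finset V).powerset.filter (fun S => A ⊆ S),
      p ^ S.card * (1 - p) ^ (Fintype.card V - S.card)
      = ∑ T ∈ ((Finset.univ : Finset V) \ A).powerset,
        p ^ A.card * (p ^ T.card * (1 - p) ^ ((Finset.univ \ A : Finset V).card - T.card)) := by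
    refine Finset.sum_bij' (fun S _ => S \ A) (fun T _ => T ∪ A) ?_ ?_ ?_ ?_ ?_
    · intro S hS
      simp only [mem_filter, mem_powerset] at hS
      exact Finset.mem_powerset.mpr (Finset.sdiff_subset_sdiff hS.1 le_rfl)
    · intro T hT
      simp only [mem_powerset] at hT
      simp only [mem_filter, mem_powerset]
      exact ⟨Finset.subset_univ _, Finset.subset_union_right⟩
    · intro S hS
      simp only [mem_filter, mem_powerset] at hS
      exact Finset.sdiff_union_of_subset hS.2
    · intro T hT
      simp only [mem_powerset] at hT
      have : Disjoint T A := Finset.disjoint_of_subset_left hT sdiff_disjoint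
      exact Finset.union_sdiff_cancel_right this
    · intro S hS
      simp only [mem_filter, mem_powerset] at hS
      have h1 : (S \ A).card = S.card - A.card := Finset.card_sdiff_of_subset hS.2
      have h2 : ((Finset.univ \ A : Finset V)).card = Fintype.card V - A.card := by
        rw [Finset.card_sdiff_of_subset (Finset.subset_univ _), Finset.card_univ]
      have hAS : A.card ≤ S.card := Finset.card_le_card hS.2
      have hSn : S.card ≤ Fintype.card V := by
        rw [← Finset.card_univ]; exact Finset.card_le_card hS.1
      rw [h1, h2, ← mul_assoc, ← pow_add]
      have e1 : A.card + (S.card - A.card) = S.card := by omega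
      have e2 : Fintype.card V - A.card - (S.card - A.card) = Fintype.card V - S.card := by omega
      rw [e1, e2]
  rw [key, ← Finset.mul_sum, binom_sum']
  simp

/-- Every (r+1)-uniform hypergraph on n vertices with maximum degree at most d ≥ 1
contains an independent set of size at least (1 - 1/r) · n / d^(1/r). -/
theorem stmt_0 {V : Type*} [Fintype V] [DecidableEq V]
    (r : ℕ) (hr : 1 ≤ r) (d : ℝ) (hd : 1 ≤ d)
    (E : Finset (Finset V))
    (huniform : ∀ e ∈ E, e.card = r + 1)
    (hdeg : ∀ v : V, ((E.filter (fun e => v ∈ e)).card : ℝ) ≤ d) :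
    ∃ I : Finset V, (∀ e ∈ E, ¬ e ⊆ I) ∧
      (1 - 1 / (r : ℝ)) * (Fintype.card V : ℝ) / d ^ ((1 : ℝ) / r) ≤ (I.card : ℝ) := by
  classical
  set n := Fintype.card V with hn
  have hr0 : (0:ℝ) < r := by exact_mod_cast hr
  have hd0 : (0:ℝ) < d := lt_of_lt_of_le one_pos hd
  set D : ℝ := d ^ ((1:ℝ)/r) with hDdef
  have hD0 : 0 < D := Real.rpow_pos_of_pos hd0 _
  have hD1 : 1 ≤ D := Real.one_le_rpow hd (by positivity)
  have hDr : D ^ r = d := by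
    rw [hDdef, ← Real.rpow_natCast (d ^ ((1:ℝ)/r)) r, ← Real.rpow_mul hd0.le,
      one_div_mul_cancel hr0.ne', Real.rpow_one]
  set p : ℝ := 1 / D with hpdef
  have hp0 : 0 < p := by positivity
  have hp1 : p ≤ 1 := by rw [hpdef]; exact div_le_one_of_le₀ hD1 hD0.le
  have hpd : d * p ^ r = 1 := by
    rw [hpdef, div_pow, one_pow, hDr]
    field_simp
  set P := (Finset.univ : Finset V).powerset with hP
  set w : Finset V → ℝ := fun S => p ^ S.card * (1 - p) ^ (n - S.card) with hw
  have hw0 : ∀ S, 0 ≤ w S := fun S => by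
    have : (0:ℝ) ≤ 1 - p := by linarith
    positivity
  -- total mass 1
  have hCS : ∀ A : Finset V, ∑ S ∈ P.filter (fun S => A ⊆ S), w S = p ^ A.card := by
    intro A; exact cond_sum' A p
  have hw1 : ∑ S ∈ P, w S = 1 := by
    have := hCS ∅
    rw [Finset.filter_true_of_mem (fun S _ => Finset.empty_subset S)] at this
    simpa using this
  -- indicator sums
  have hind : ∀ A : Finset V, ∑ S ∈ P, (if A ⊆ S then w S else 0) = p ^ A.card := by
    intro A
    rw [← Finset.sum_filter]
    exact hCS A
  -- card-as-sum helper
  have hScard : ∀ (s : Finset V) (T : Finset V),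
      ((T.filter (fun x => x ∈ s)).card : ℝ) = ∑ x ∈ T, (if x ∈ s then (1:ℝ) else 0) := by
    intro s T
    rw [Finset.sum_boole]
  -- expected size
  have hcard : ∑ S ∈ P, w S * (S.card : ℝ) = (n : ℝ) * p := by
    have step : ∀ S : Finset V, w S * (S.card : ℝ)
        = ∑ v ∈ Finset.univ, (if ({v} : Finset V) ⊆ S then w S else 0) := by
      intro S
      have hc : (S.card : ℝ) = ∑ v ∈ Finset.univ, (if v ∈ S then (1:ℝ) else 0) := by
        rw [← hScard S Finset.univ, Finset.filter_mem_eq_inter, Finset.univ_inter]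
      rw [hc, Finset.mul_sum]
      refine Finset.sum_congr rfl fun v _ => ?_
      simp only [Finset.singleton_subset_iff, mul_ite, mul_one, mul_zero]
    rw [Finset.sum_congr rfl fun S _ => step S, Finset.sum_comm]
    rw [Finset.sum_congr rfl fun v _ => hind {v}]
    simp [mul_comm, hn]
  -- expected number of edges inside
  have hEcount : ∑ S ∈ P, w S * ((E.filter (fun e => e ⊆ S)).card : ℝ)
      = (E.card : ℝ) * p ^ (r+1) := by
    have step : ∀ S : Finset V, w S * ((E.filter (fun e => e ⊆ S)).card : ℝ)
        = ∑ e ∈ E, (if e ⊆ S then w S else 0) := by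
      intro S
      have hc : ((E.filter (fun e => e ⊆ S)).card : ℝ)
          = ∑ e ∈ E, (if e ⊆ S then (1:ℝ) else 0) := by rw [Finset.sum_boole]
      rw [hc, Finset.mul_sum]
      refine Finset.sum_congr rfl fun e _ => ?_
      split <;> simp
    rw [Finset.sum_congr rfl fun S _ => step S, Finset.sum_comm]
    rw [Finset.sum_congr rfl fun e he => hind e]
    rw [Finset.sum_congr rfl fun e he => by rw [huniform e he]]
    rw [Finset.sum_const, nsmul_eq_mul]
  -- degree double count
  have hdeg2 : (E.card : ℝ) * (r + 1) ≤ d * n := by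
    have hdc : ∑ e ∈ E, ((e.card : ℝ)) = ∑ v ∈ Finset.univ, ((E.filter (fun e => v ∈ e)).card : ℝ) := by
      have l1 : ∀ e : Finset V, (e.card : ℝ) = ∑ v ∈ Finset.univ, (if v ∈ e then (1:ℝ) else 0) := by
        intro e
        rw [← hScard e Finset.univ, Finset.filter_mem_eq_inter, Finset.univ_inter]
      rw [Finset.sum_congr rfl fun e _ => l1 e, Finset.sum_comm]
      exact Finset.sum_congr rfl fun v _ => Finset.sum_boole _ _
    have l2 : ∑ e ∈ E, ((e.card : ℝ)) = (E.card : ℝ) * (r + 1) := by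
      rw [Finset.sum_congr rfl fun e he => by rw [huniform e he]]
      push_cast
      rw [Finset.sum_const, nsmul_eq_mul]
    have l3 : ∑ v ∈ Finset.univ, ((E.filter (fun e => v ∈ e)).card : ℝ) ≤ ∑ v ∈ (Finset.univ : Finset V), d :=
      Finset.sum_le_sum fun v _ => hdeg v
    rw [Finset.sum_const, nsmul_eq_mul, Finset.card_univ] at l3
    rw [← l2, hdc]
    linarith [l3, mul_comm (n:ℝ) d]
  -- the average of X
  set X : Finset V → ℝ := fun S => (S.card : ℝ) - ((E.filter (fun e => e ⊆ S)).card : ℝ) with hX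
  set c : ℝ := (n : ℝ) * p - (E.card : ℝ) * p ^ (r + 1) with hc
  have havg : ∑ S ∈ P, w S * X S = c := by
    simp only [hX, mul_sub]
    rw [Finset.sum_sub_distrib, hcard, hEcount]
  -- existence of a good S
  have hex : ∃ S ∈ P, c ≤ X S := by
    by_contra hcon
    push_neg at hcon
    have huP : Finset.univ ∈ P := Finset.mem_powerset.mpr le_rfl
    have hwu : 0 < w Finset.univ := by
      rw [hw]
      simp only [Finset.card_univ, ← hn, Nat.sub_self, pow_zero, mul_one]
      positivity
    have hlt : ∑ S ∈ P, w S * X S < ∑ S ∈ P, w S * c := by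
      refine Finset.sum_lt_sum (fun S hS => ?_) ⟨Finset.univ, huP, ?_⟩
      · exact mul_le_mul_of_nonneg_left (hcon S hS).le (hw0 S)
      · exact (mul_lt_mul_iff_right₀ hwu).mpr (hcon _ huP)
    rw [havg, ← Finset.sum_mul, hw1, one_mul] at hlt
    exact lt_irrefl c hlt
  obtain ⟨S₀, _, hS₀⟩ := hex
  -- build the independent set
  set B := E.filter (fun e => e ⊆ S₀) with hB
  have hBne : ∀ e ∈ B, e.Nonempty := by
    intro e he
    have := huniform e (Finset.mem_filter.mp he).1
    exact Finset.card_pos.mp (by omega)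
  set img := B.attach.image (fun e => (hBne e.1 e.2).choose) with himg
  refine ⟨S₀ \ img, ?_, ?_⟩
  · intro e he hsub
    have heS : e ⊆ S₀ := hsub.trans (Finset.sdiff_subset)
    have heB : e ∈ B := Finset.mem_filter.mpr ⟨he, heS⟩
    have hv : (hBne e heB).choose ∈ e := (hBne e heB).choose_spec
    have hvimg : (hBne e heB).choose ∈ img := by
      rw [himg]
      exact Finset.mem_image.mpr ⟨⟨e, heB⟩, Finset.mem_attach _ _, rfl⟩
    have := hsub hv
    rw [Finset.mem_sdiff] at this
    exact this.2 hvimg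
  · -- size bound
    have hcard1 : S₀.card ≤ (S₀ \ img).card + img.card := Finset.card_le_card_sdiff_add_card
    have hcard2 : img.card ≤ B.card := le_trans Finset.card_image_le (le_of_eq (Finset.card_attach))
    have hXI : X S₀ ≤ ((S₀ \ img).card : ℝ) := by
      have : S₀.card ≤ (S₀ \ img).card + B.card := by omega
      rw [hX]
      push_cast
      have := (Nat.cast_le (α := ℝ)).mpr this
      push_cast at this
      linarith
    -- numeric chain: target ≤ c ≤ X S₀ ≤ card
    have hcb : ((E.card : ℝ)) * p ^ (r+1) ≤ (n : ℝ) * p / (r + 1) := by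
      have h1 : (E.card : ℝ) ≤ d * n / (r + 1) := by
        rw [le_div_iff₀ (by positivity)]
        exact hdeg2
      have hpr : (0:ℝ) < p ^ (r+1) := by positivity
      calc ((E.card : ℝ)) * p ^ (r+1) ≤ (d * n / (r + 1)) * p ^ (r+1) :=
            mul_le_mul_of_nonneg_right h1 hpr.le
        _ = (n : ℝ) * p / (r + 1) * (d * p ^ r) := by ring
        _ = (n : ℝ) * p / (r + 1) := by rw [hpd, mul_one]
    have hclb : (n : ℝ) * p * (r / (r + 1)) ≤ c := by
      rw [hc]
      have : (n:ℝ) * p - (n:ℝ) * p / (r+1) = (n:ℝ) * p * (r / (r+1)) := by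
        field_simp
        ring
      linarith [hcb, this]
    have htarget : (1 - 1 / (r : ℝ)) * (n : ℝ) / D ≤ (n : ℝ) * p * (r / (r + 1)) := by
      have hnp : (1 - 1 / (r : ℝ)) * (n : ℝ) / D = (1 - 1 / (r : ℝ)) * ((n:ℝ) * p) := by
        rw [hpdef]; field_simp
      rw [hnp]
      have hfrac : (1 - 1 / (r : ℝ)) ≤ (r:ℝ) / ((r:ℝ) + 1) := by
        rw [le_div_iff₀ (by linarith : (0:ℝ) < (r:ℝ)+1)]
        have h : (1 - 1/(r:ℝ)) * ((r:ℝ)+1) = (r:ℝ) + 1 - 1 - 1/(r:ℝ) := by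
          field_simp; ring
        rw [h]
        have hpos : (0:ℝ) < 1/(r:ℝ) := by positivity
        linarith
      have hnp0 : (0:ℝ) ≤ (n:ℝ) * p := by positivity
      nlinarith [hfrac, hnp0]
    calc (1 - 1 / (r : ℝ)) * (n : ℝ) / D ≤ (n : ℝ) * p * (r / (r + 1)) := htarget
      _ ≤ c := hclb
      _ ≤ X S₀ := hS₀
      _ ≤ ((S₀ \ img).card : ℝ) := hXI
end

section
/- If H is an (r+1)-uniform locally sparse hypergraph (no 2-cycles or 3-cycles), v is a vertex, I is an independent set, I_v = I ∖ (N(v) ∪ {v}), and e, f are distinct edges containing v with subsets S ⊆ e∖{v} and T ⊆ f∖{v} such that I_v ∪ S and I_v ∪ T are both independent, then I_v ∪ S ∪ T is independent. -/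
/-- A k-cycle in a hypergraph: distinct edges e_0, …, e_{k-1} and distinct vertices
v_0, …, v_{k-1} with v_i ∈ e_i ∩ e_{i+1} (indices mod k). -/
def HasCycle {V : Type*} (E : Finset (Finset V)) (k : ℕ) [NeZero k] : Prop :=
  ∃ e : Fin k → Finset V, (∀ i, e i ∈ E) ∧ Function.Injective e ∧
    ∃ v : Fin k → V, Function.Injective v ∧ ∀ i, v i ∈ e i ∧ v i ∈ e (i + 1)

lemma two_cycle_aux {V : Type*} (E : Finset (Finset V))
    (a b : Finset V) (ha : a ∈ E) (hb : b ∈ E) (hab : a ≠ b)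
    (x y : V) (hxy : x ≠ y) (hxa : x ∈ a) (hxb : x ∈ b) (hya : y ∈ a) (hyb : y ∈ b) :
    HasCycle E 2 := by
  refine ⟨![a, b], ?_, ?_, ![x, y], ?_, ?_⟩
  · intro i; fin_cases i <;> simpa
  · intro i j h; fin_cases i <;> fin_cases j <;> simp_all
  · intro i j h; fin_cases i <;> fin_cases j <;> simp_all
  · intro i; fin_cases i <;> simp [hxa, hxb, hya, hyb] <;>
      first
        | exact ⟨hxa, hxb⟩
        | exact ⟨hyb, hya⟩

lemma three_cycle_aux {V : Type*} (E : Finset (Finset V))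
    (a b c : Finset V) (ha : a ∈ E) (hb : b ∈ E) (hc : c ∈ E)
    (hab : a ≠ b) (hbc : b ≠ c) (hac : a ≠ c)
    (x y z : V) (hxy : x ≠ y) (hyz : y ≠ z) (hxz : x ≠ z)
    (hxa : x ∈ a) (hxb : x ∈ b) (hyb : y ∈ b) (hyc : y ∈ c) (hzc : z ∈ c) (hza : z ∈ a) :
    HasCycle E 3 := by
  refine ⟨![a, b, c], ?_, ?_, ![x, y, z], ?_, ?_⟩
  · intro i; fin_cases i <;> simpa
  · intro i j h; fin_cases i <;> fin_cases j <;> simp_all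
  · intro i j h; fin_cases i <;> fin_cases j <;> simp_all
  · intro i; fin_cases i <;>
      first
        | exact ⟨hxa, hxb⟩
        | exact ⟨hyb, hyc⟩
        | exact ⟨hzc, hza⟩

/-- In a locally sparse (r+1)-uniform hypergraph, if S ⊆ e∖{v}, T ⊆ f∖{v} for distinct
edges e, f through v, and I_v ∪ S, I_v ∪ T are independent, so is I_v ∪ S ∪ T. -/
theorem stmt_3 {V : Type*} [DecidableEq V]
    (r : ℕ) (E : Finset (Finset V))
    (huniform : ∀ e ∈ E, e.card = r + 1)
    (hsparse : ¬ HasCycle E 2 ∧ ¬ HasCycle E 3)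
    (v : V) (I : Set V)
    (hI : ∀ g ∈ E, ¬ ↑g ⊆ I)
    (Iv : Set V)
    (hIv : Iv = I \ ({u : V | ∃ g ∈ E, v ∈ g ∧ u ∈ g ∧ u ≠ v} ∪ {v}))
    (e f : Finset V) (he : e ∈ E) (hf : f ∈ E) (hef : e ≠ f)
    (hve : v ∈ e) (hvf : v ∈ f)
    (S T : Finset V) (hS : S ⊆ e.erase v) (hT : T ⊆ f.erase v)
    (hIS : ∀ g ∈ E, ¬ ↑g ⊆ Iv ∪ ↑S)
    (hIT : ∀ g ∈ E, ¬ ↑g ⊆ Iv ∪ ↑T) :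
    ∀ g ∈ E, ¬ ↑g ⊆ Iv ∪ ↑S ∪ ↑T := by
  intro g hg hsub
  obtain ⟨t, htg, htIS⟩ : ∃ t ∈ g, t ∉ Iv ∪ ↑S := by
    by_contra h
    push_neg at h
    exact hIS g hg fun x hx => h x hx
  obtain ⟨s, hsg, hsIT⟩ : ∃ s ∈ g, s ∉ Iv ∪ ↑T := by
    by_contra h
    push_neg at h
    exact hIT g hg fun x hx => h x hx
  have htT : t ∈ T := by
    have := hsub htg
    simp only [Set.mem_union, Finset.mem_coe] at this htIS
    push_neg at htIS
    tauto
  have hsS : s ∈ S := by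
    have := hsub hsg
    simp only [Set.mem_union, Finset.mem_coe] at this hsIT
    push_neg at hsIT
    tauto
  have hse := Finset.mem_of_mem_erase (hS hsS)
  have hsv : s ≠ v := Finset.ne_of_mem_erase (hS hsS)
  have htf := Finset.mem_of_mem_erase (hT htT)
  have htv : t ≠ v := Finset.ne_of_mem_erase (hT htT)
  by_cases hge : g = e
  · -- t ∈ e ∩ f, v ∈ e ∩ f, t ≠ v
    exact hsparse.1 (two_cycle_aux E e f he hf hef t v htv (hge ▸ htg) htf hve hvf)
  by_cases hgf : g = f
  · exact hsparse.1 (two_cycle_aux E e f he hf hef s v hsv hse (hgf ▸ hsg) hve hvf)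
  by_cases hst : s = t
  · exact hsparse.1 (two_cycle_aux E e f he hf hef s v hsv hse (hst ▸ htf) hve hvf)
  · exact hsparse.2 (three_cycle_aux E e g f he hg hf (Ne.symm hge) hgf hef
      s t v hst htv (Ne.symm hsv).symm hse hsg htg htf hvf hve)
end
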